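/- Let S be a finite semigroup satisfying identity (1). Then for every x ∈ S and every n ≥ 1 such that x^n is idempotent, x^{n+1} = x^n. -/

import Mathlib

/-- `spow s n` is the `n`-th power of `s` in a semigroup, for `n ≥ 1`
(with the junk convention `spow s 0 = s`). -/
def spow {S : Type*} [Semigroup S] (s : S) : ℕ → S
  | 0 => s
  | 1 => s
  | n + 2 => spow s (n + 1) * s

lemma spow_succ {S : Type*} [Semigroup S] (s : S) (a : ℕ) (ha : 1 ≤ a) :
    spow s (a + 1) = spow s a * s := by
  obtain ⟨b, rfl⟩ := Nat.exists_eq_add_of_le ha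
  rw [show 1 + b + 1 = b + 2 from by omega, show 1 + b = b + 1 from by omega]
  rfl

lemma spow_add {S : Type*} [Semigroup S] (s : S) (a b : ℕ) (ha : 1 ≤ a) (hb : 1 ≤ b) :
    spow s (a + b) = spow s a * spow s b := by
  induction b with
  | zero => omega
  | succ b ih =>
    rcases Nat.eq_or_lt_of_le hb with h | h
    · simp [← h, spow_succ s a ha, spow]
    · have hb1 : 1 ≤ b := by omega
      rw [← Nat.add_assoc, spow_succ s (a + b) (by omega), ih hb1,
        spow_succ s b hb1, mul_assoc]

lemma spow_mul {S : Type*} [Semigroup S] (s : S) (a b : ℕ) (ha : 1 ≤ a) (hb : 1 ≤ b) :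
    spow s (a * b) = spow (spow s a) b := by
  induction b with
  | zero => omega
  | succ b ih =>
    rcases Nat.eq_or_lt_of_le hb with h | h
    · simp [← h, spow]
    · have hb1 : 1 ≤ b := by omega
      rw [Nat.mul_succ, spow_add s (a*b) a (Nat.mul_pos ha hb1) ha, ih hb1,
        spow_succ _ b hb1]

/-- If a finite semigroup `S` satisfies identity (1), then for every `x ∈ S` and
every `n ≥ 1` such that `x^n` is idempotent, `x^(n+1) = x^n`. -/
theorem stmt_1 {S : Type*} [Semigroup S] [Fintype S]
    (hId : ∀ s t e : S, e * e = e → ∀ n : ℕ, 1 ≤ n →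
      spow (e * s * e * t * e) n * spow (e * s * e * t * e) n = spow (e * s * e * t * e) n →
      spow (e * s * e * t * e) n * t * spow (e * s * e * t * e) n = spow (e * s * e * t * e) n)
    (x : S) (n : ℕ) (hn : 1 ≤ n)
    (hx : spow x n * spow x n = spow x n) :
    spow x (n + 1) = spow x n := by
  set e := spow x n with he
  -- x^(kn) = x^n for k ≥ 1
  have hkn : ∀ k : ℕ, 1 ≤ k → spow x (k * n) = e := by
    intro k hk
    induction k with
    | zero => omega
    | succ k ih =>
      rcases Nat.eq_or_lt_of_le hk with h | h
      · simp [← h, spow]; exact he.symm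
      · have hk1 : 1 ≤ k := by omega
        rw [Nat.succ_mul, spow_add x (k*n) n (Nat.mul_pos (by omega) hn) hn, ih hk1, ← he, hx]
  -- e * x * e * x * e = x^(3n+2)
  have key : e * x * e * x * e = spow x (3 * n + 2) := by
    have h1 : spow x 1 = x := rfl
    rw [show 3 * n + 2 = n + 1 + n + 1 + n by ring,
      spow_add x (n+1+n+1) n (by omega) hn,
      spow_add x (n+1+n) 1 (by omega) (by omega),
      spow_add x (n+1) n (by omega) hn,
      spow_add x n 1 hn (by omega), h1]
  -- (e x e x e)^n = e
  have hpow : spow (e * x * e * x * e) n = e := by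
    rw [key, ← spow_mul x (3*n+2) n (by omega) hn,
      show (3*n+2) * n = (3*n+2) * n by rfl]
    exact hkn (3*n+2) (by omega)
  have := hId x x e hx n hn (by rw [hpow]; exact hx)
  rw [hpow] at this
  -- this : e * x * e = e ; but e * x * e = x^(2n+1) = x^(n+1) * x^n
  have h2 : e * x * e = spow x (n + 1) * e := by
    rw [spow_succ x n hn, ← he]
  rw [h2] at this
  -- spow x (n+1) * e = e; also spow x (n+1) * e = spow x (2n+1) = spow x (n+1)
  have h3 : spow x (n + 1) * e = spow x (n + 1) := by
    rw [he, ← spow_add x (n+1) n (by omega) hn, show n+1+n = 2*n+1 by ring,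
      spow_succ x (2*n) (by omega), hkn 2 (by omega), spow_succ x n hn, ← he]
  rw [← h3, this]
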